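/- Let a_s, b_s, a_p, b_p > 0 and P > 0, and let X and Y be independent real random variables with X having the Gamma distribution with shape a_s and scale b_s, and Y having the Gamma distribution with shape a_p and scale b_p. Then the estimated data rate Ĉ = log₂(1 + P·X/Y) is integrable: E[log₂(1 + P·X/Y)] < ∞. (This guarantees that the expected secondary throughput R_s(τ) in equation (19) of the paper is well defined and finite.) -/

import Mathlib

open MeasureTheory ProbabilityTheory Real Set
open scoped NNReal ENNReal

/-- The Gamma distribution with shape `a > 0` and scale `b > 0`:
the measure on `ℝ` with density `x ↦ x^(a-1) * exp (-x/b) / (Γ a * b^a)` on `(0, ∞)`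
and `0` elsewhere. -/
noncomputable def gammaScaleMeasure (a b : ℝ) : Measure ℝ :=
  volume.withDensity fun x =>
    ENNReal.ofReal (if 0 < x then x ^ (a - 1) * Real.exp (-(x / b)) / (Real.Gamma a * b ^ a) else 0)

/-- The unnormalized gamma integrand is integrable on `(0, ∞)`. -/
lemma gammaAux_integrableOn {c b : ℝ} (hc : 0 < c) (hb : 0 < b) :
    IntegrableOn (fun x : ℝ => x ^ (c - 1) * Real.exp (-(x / b))) (Ioi 0) := by
  have h0 : IntegrableOn (fun x : ℝ => Real.exp (-x) * x ^ (c - 1)) (Ioi 0) :=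
    Real.GammaIntegral_convergent hc
  have h1 : IntegrableOn (fun x : ℝ => Real.exp (-(b⁻¹ * x)) * (b⁻¹ * x) ^ (c - 1)) (Ioi 0) := by
    have := (integrableOn_Ioi_comp_mul_left_iff
      (fun x : ℝ => Real.exp (-x) * x ^ (c - 1)) 0 (show (0:ℝ) < b⁻¹ by positivity)).2
      (by simpa using h0)
    simpa using this
  have h2 := h1.const_mul (b ^ (c - 1))
  refine IntegrableOn.congr_fun h2 (fun x hx => ?_) measurableSet_Ioi
  have hx0 : (0:ℝ) < x := hx
  have hxb : (b⁻¹ * x) ^ (c - 1) = b⁻¹ ^ (c - 1) * x ^ (c - 1) :=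
    Real.mul_rpow (by positivity) hx0.le
  have h3 : b ^ (c - 1) * b⁻¹ ^ (c - 1) = 1 := by
    rw [← Real.mul_rpow hb.le (by positivity), mul_inv_cancel₀ hb.ne', Real.one_rpow]
  have hdiv : Real.exp (-(b⁻¹ * x)) = Real.exp (-(x / b)) := by
    rw [div_eq_inv_mul]
  rw [hxb, hdiv]
  linear_combination (Real.exp (-(x / b)) * x ^ (c - 1)) * h3

lemma gammaScale_density_measurable (a b : ℝ) :
    Measurable (fun x : ℝ => ENNReal.ofReal
      (if 0 < x then x ^ (a - 1) * Real.exp (-(x / b)) / (Real.Gamma a * b ^ a) else 0)) := by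
  apply Measurable.ennreal_ofReal
  apply Measurable.ite (measurableSet_Ioi (a := (0:ℝ)))
  · fun_prop
  · exact measurable_const

/-- Moments of the gamma distribution: `x ↦ x ^ s` is integrable whenever `a + s > 0`. -/
lemma gamma_moment_integrable {a b : ℝ} (ha : 0 < a) (hb : 0 < b) {s : ℝ} (hs : 0 < a + s) :
    Integrable (fun x : ℝ => x ^ s) (gammaScaleMeasure a b) := by
  have hΓ : 0 < Real.Gamma a := Real.Gamma_pos_of_pos ha
  have hba : (0:ℝ) < b ^ a := Real.rpow_pos_of_pos hb a
  rw [gammaScaleMeasure, integrable_withDensity_iff (gammaScale_density_measurable a b)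
    (Filter.Eventually.of_forall fun x => ENNReal.ofReal_lt_top)]
  have key : (fun x : ℝ => x ^ s * (ENNReal.ofReal
      (if 0 < x then x ^ (a - 1) * Real.exp (-(x / b)) / (Real.Gamma a * b ^ a) else 0)).toReal)
      = Set.indicator (Ioi 0)
        (fun x => (Real.Gamma a * b ^ a)⁻¹ * (x ^ (a + s - 1) * Real.exp (-(x / b)))) := by
    funext x
    by_cases hx : 0 < x
    · rw [if_pos hx, Set.indicator_of_mem (mem_Ioi.2 hx),
        ENNReal.toReal_ofReal (by positivity)]
      rw [show a + s - 1 = s + (a - 1) by ring, Real.rpow_add hx]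
      field_simp
    · rw [if_neg hx, Set.indicator_of_notMem (by simpa using hx)]
      simp
  rw [key, integrable_indicator_iff measurableSet_Ioi]
  exact (gammaAux_integrableOn hs hb).const_mul _

/-- The gamma distribution is concentrated on the positive reals. -/
lemma gammaScale_ae_pos {a b : ℝ} :
    ∀ᵐ x ∂(gammaScaleMeasure a b), 0 < x := by
  rw [ae_iff]
  have hset : {x : ℝ | ¬ 0 < x} = Iic 0 := by ext x; simp [not_lt]
  rw [hset, gammaScaleMeasure, withDensity_apply _ measurableSet_Iic]
  refine (lintegral_eq_zero_iff (gammaScale_density_measurable a b)).2 ?_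
  refine (ae_restrict_iff' measurableSet_Iic).2 (Filter.Eventually.of_forall fun x hx => ?_)
  simp [not_lt.mpr (mem_Iic.1 hx)]

lemma gammaScale_neZero {a b : ℝ} (ha : 0 < a) (hb : 0 < b) :
    NeZero (gammaScaleMeasure a b) := by
  constructor
  intro h
  have hΓ : 0 < Real.Gamma a := Real.Gamma_pos_of_pos ha
  have h1 : gammaScaleMeasure a b (Ioi 0) = 0 := by rw [h]; rfl
  rw [gammaScaleMeasure, withDensity_apply _ measurableSet_Ioi] at h1
  have h2 : 0 < ∫⁻ x in Ioi (0:ℝ), ENNReal.ofReal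
      (if 0 < x then x ^ (a - 1) * Real.exp (-(x / b)) / (Real.Gamma a * b ^ a) else 0) := by
    rw [lintegral_pos_iff_support (gammaScale_density_measurable a b)]
    have hsub : Ioi (0:ℝ) ⊆ Function.support (fun x : ℝ => ENNReal.ofReal
        (if 0 < x then x ^ (a - 1) * Real.exp (-(x / b)) / (Real.Gamma a * b ^ a) else 0)) := by
      intro x hx
      have hx0 : (0:ℝ) < x := hx
      simp only [Function.mem_support, ne_eq, ENNReal.ofReal_eq_zero, not_le, if_pos hx0]
      positivity
    calc (0:ℝ≥0∞) < volume.restrict (Ioi 0) (Ioi (0:ℝ)) := by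
          rw [Measure.restrict_apply_self, Real.volume_Ioi]; simp
      _ ≤ _ := measure_mono hsub
  rw [h1] at h2
  exact lt_irrefl _ h2

/-- `log t ≤ t ^ ε / ε` for `t, ε > 0`. -/
lemma log_le_rpow_div {t ε : ℝ} (ht : 0 < t) (hε : 0 < ε) :
    Real.log t ≤ t ^ ε / ε := by
  have h := Real.log_le_sub_one_of_pos (Real.rpow_pos_of_pos ht ε)
  rw [Real.log_rpow ht] at h
  rw [le_div_iff₀ hε]
  nlinarith

/-- Key pointwise bound. -/
lemma logb_bound {P x y ε : ℝ} (hP : 0 < P) (hx : 0 < x) (hy : 0 < y) (hε : 0 < ε) :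
    |Real.logb 2 (1 + P * x / y)| ≤
      (Real.log 2)⁻¹ * (P * x + (Real.log 2 + y ^ (-ε) / ε)) := by
  have hl2 : 0 < Real.log 2 := Real.log_pos one_lt_two
  have hq : 0 ≤ P * x / y := by positivity
  have h1 : 0 ≤ Real.logb 2 (1 + P * x / y) := Real.logb_nonneg one_lt_two (by linarith)
  rw [abs_of_nonneg h1, Real.logb, div_eq_inv_mul]
  have hyinv : 0 < 1 / y := by positivity
  have hmain : Real.log (1 + P * x / y) ≤ P * x + (Real.log 2 + y ^ (-ε) / ε) := by
    have hprod : 1 + P * x / y ≤ (1 + P * x) * (1 + 1 / y) := by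
      have hpq : P * x / y = P * x * (1 / y) := by ring
      nlinarith [mul_pos hP hx]
    have hA : Real.log (1 + P * x / y) ≤ Real.log ((1 + P * x) * (1 + 1 / y)) :=
      Real.log_le_log (by positivity) hprod
    rw [Real.log_mul (by positivity) (by positivity)] at hA
    have hB : Real.log (1 + P * x) ≤ P * x := by
      have := Real.log_le_sub_one_of_pos (show (0:ℝ) < 1 + P * x by positivity)
      linarith
    have hC : Real.log (1 + 1 / y) ≤ Real.log 2 + y ^ (-ε) / ε := by
      have hrpos : 0 ≤ y ^ (-ε) / ε := by positivity
      rcases le_or_gt 1 y with h | h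
      · have h1y : 1 / y ≤ 1 := by
          rw [div_le_one hy]; exact h
        have : Real.log (1 + 1 / y) ≤ Real.log 2 :=
          Real.log_le_log (by positivity) (by linarith)
        linarith
      · have hge : 1 ≤ 1 / y := by rw [le_div_iff₀ hy]; linarith
        have h2 : 1 + 1 / y ≤ 2 / y := by
          have : (2:ℝ) / y = 1 / y + 1 / y := by ring
          linarith
        have h3 : Real.log (1 + 1 / y) ≤ Real.log 2 + Real.log (1 / y) := by
          have h' := Real.log_le_log (by positivity) h2
          rw [Real.log_div two_ne_zero hy.ne'] at h'
          have hlog : Real.log (1 / y) = -Real.log y := by rw [one_div, Real.log_inv]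
          linarith
        have h4 : Real.log (1 / y) ≤ (1 / y) ^ ε / ε := log_le_rpow_div hyinv hε
        have h5 : (1 / y) ^ ε = y ^ (-ε) := by
          rw [one_div, Real.inv_rpow hy.le, ← Real.rpow_neg hy.le]
        rw [h5] at h4
        linarith
    linarith
  have := mul_le_mul_of_nonneg_left hmain (inv_nonneg.2 hl2.le)
  linarith

/-- Let `X` and `Y` be independent with `X` Gamma (shape `a_s`, scale `b_s`)
and `Y` Gamma (shape `a_p`, scale `b_p`), and `P > 0`. Then the estimated data rate
`Ĉ = log₂ (1 + P X / Y)` is integrable: `E[log₂ (1 + P X / Y)] < ∞`. -/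
theorem estimated_rate_integrable {Ω : Type*} [MeasurableSpace Ω] (μ : Measure Ω)
    [IsProbabilityMeasure μ] (as bs ap bp P : ℝ)
    (has : 0 < as) (hbs : 0 < bs) (hap : 0 < ap) (hbp : 0 < bp) (hP : 0 < P)
    (X Y : Ω → ℝ) (hindep : IndepFun X Y μ)
    (hX : Measure.map X μ = gammaScaleMeasure as bs)
    (hY : Measure.map Y μ = gammaScaleMeasure ap bp) :
    Integrable (fun ω => Real.logb 2 (1 + P * X ω / Y ω)) μ := by
  have hXm : AEMeasurable X μ :=
    aemeasurable_of_map_neZero (by rw [hX]; exact gammaScale_neZero has hbs)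
  have hYm : AEMeasurable Y μ :=
    aemeasurable_of_map_neZero (by rw [hY]; exact gammaScale_neZero hap hbp)
  have hXpos : ∀ᵐ ω ∂μ, 0 < X ω := by
    have h := gammaScale_ae_pos (a := as) (b := bs)
    rw [← hX] at h
    exact (ae_map_iff hXm measurableSet_Ioi).1 h
  have hYpos : ∀ᵐ ω ∂μ, 0 < Y ω := by
    have h := gammaScale_ae_pos (a := ap) (b := bp)
    rw [← hY] at h
    exact (ae_map_iff hYm measurableSet_Ioi).1 h
  have hXint : Integrable X μ := by
    have h1 : Integrable (fun x : ℝ => x) (Measure.map X μ) := by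
      rw [hX]
      have := gamma_moment_integrable has hbs (s := 1) (by linarith)
      simpa [Real.rpow_one] using this
    exact (integrable_map_measure aestronglyMeasurable_id hXm).1 h1
  have hYint : Integrable (fun ω => Y ω ^ (-(ap / 2))) μ := by
    have h1 : Integrable (fun y : ℝ => y ^ (-(ap / 2))) (Measure.map Y μ) := by
      rw [hY]
      exact gamma_moment_integrable hap hbp (by linarith)
    exact (integrable_map_measure
      (by fun_prop : Measurable fun y : ℝ => y ^ (-(ap / 2))).aestronglyMeasurable hYm).1 h1
  have hg : Integrable (fun ω =>
      (Real.log 2)⁻¹ * (P * X ω + (Real.log 2 + Y ω ^ (-(ap / 2)) / (ap / 2)))) μ :=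
    (((hXint.const_mul P).add ((integrable_const _).add (hYint.div_const _))).const_mul _)
  refine hg.mono' ?_ ?_
  · have hA : AEMeasurable (fun ω => 1 + P * X ω / Y ω) μ :=
      aemeasurable_const.add ((hXm.const_mul P).div hYm)
    have : AEMeasurable (fun ω => Real.logb 2 (1 + P * X ω / Y ω)) μ := by
      simp only [Real.logb]
      exact (Real.measurable_log.comp_aemeasurable hA).div aemeasurable_const
    exact this.aestronglyMeasurable
  · filter_upwards [hXpos, hYpos] with ω hx hy
    rw [Real.norm_eq_abs]
    exact logb_bound hP hx hy (by linarith)
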